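/- Let K ≥ 3, and for each k = 2, …, K let A_k be a real n × n^{k−1} matrix with associated vector field f_k(x) = A_k x^{[k−1]}; set f = Σ_{k=2}^{K} f_k and g(x) = C x for a real m × n matrix C. Then for every j ≥ 0, every component of L_f^j g is a polynomial in x of total degree at most j(K−2)+1, and its homogeneous component of degree exactly j(K−2)+1 equals the corresponding component of L_{f_K}^j g; that is, the top-degree homogeneous part of the j-th Lie derivative of the output along f is generated exclusively by the vector field of maximum cardinality K. -/

import Mathlib

open Matrix BigOperators

noncomputable section

/-- Kronecker product of (column) vectors. -/
def vkron {a b : ℕ} (u : Fin a → ℝ) (v : Fin b → ℝ) : Fin (a * b) → ℝ :=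
  fun i => u (finProdFinEquiv.symm i).1 * v (finProdFinEquiv.symm i).2

/-- Cast a vector along an equality of dimensions. -/
def castV {a b : ℕ} (h : a = b) (v : Fin a → ℝ) : Fin b → ℝ :=
  fun i => v (Fin.cast h.symm i)

/-- `vpow x m = x ⊗ x ⊗ ⋯ ⊗ x` (`m` factors), the `m`-fold Kronecker power. -/
def vpow {n : ℕ} (x : Fin n → ℝ) : (m : ℕ) → Fin (n ^ m) → ℝ
  | 0 => fun _ => 1
  | m + 1 => castV (pow_succ' n m).symm (vkron x (vpow x m))

/-- Kronecker product of matrices. -/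
def mkron {a b c d : ℕ} (A : Matrix (Fin a) (Fin b) ℝ) (B : Matrix (Fin c) (Fin d) ℝ) :
    Matrix (Fin (a * c)) (Fin (b * d)) ℝ :=
  fun i j =>
    A (finProdFinEquiv.symm i).1 (finProdFinEquiv.symm j).1 *
      B (finProdFinEquiv.symm i).2 (finProdFinEquiv.symm j).2

/-- Cast a matrix along equalities of dimensions. -/
def castM {a b a' b' : ℕ} (ha : a = a') (hb : b = b')
    (M : Matrix (Fin a) (Fin b) ℝ) : Matrix (Fin a') (Fin b') ℝ :=
  fun i j => M (Fin.cast ha.symm i) (Fin.cast hb.symm j)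

/-- `Bmat k N hk A = Σ_{i=1}^{N} I^{⊗(i-1)} ⊗ A ⊗ I^{⊗(N-i)}`, where `A` is `n × n^(k-1)`
and `I` is the `n × n` identity; the result is an `n^N × n^(N+k-2)` matrix. -/
def Bmat {n : ℕ} (k N : ℕ) (hk : 2 ≤ k) (A : Matrix (Fin n) (Fin (n ^ (k - 1))) ℝ) :
    Matrix (Fin (n ^ N)) (Fin (n ^ (N + k - 2))) ℝ :=
  ∑ i : Fin N,
    castM (by have := i.isLt; rw [← pow_succ', ← pow_add]; congr 1; omega)
      (by have := i.isLt; have := hk; rw [← pow_add, ← pow_add]; congr 1; omega)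
      (mkron (1 : Matrix (Fin (n ^ (i : ℕ))) (Fin (n ^ (i : ℕ))) ℝ)
        (mkron A (1 : Matrix (Fin (n ^ (N - 1 - (i : ℕ)))) (Fin (n ^ (N - 1 - (i : ℕ)))) ℝ)))

/-- Lie derivative of an output map along a vector field. -/
def lieD {n m : ℕ} (f : (Fin n → ℝ) → Fin n → ℝ) (φ : (Fin n → ℝ) → Fin m → ℝ) :
    (Fin n → ℝ) → Fin m → ℝ :=
  fun x => fderiv ℝ φ x (f x)

/-- Iterated Lie derivative `L_f^j φ`. -/
def lieIter {n m : ℕ} (f : (Fin n → ℝ) → Fin n → ℝ) (φ : (Fin n → ℝ) → Fin m → ℝ) :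
    ℕ → (Fin n → ℝ) → Fin m → ℝ
  | 0 => φ
  | j + 1 => lieD f (lieIter f φ j)


section Helpers
open MvPolynomial

lemma totalDegree_pderiv_le' {n : ℕ} (i : Fin n) {p : MvPolynomial (Fin n) ℝ} {c : ℕ}
    (h : p.totalDegree ≤ c + 1) : ((pderiv i) p).totalDegree ≤ c := by
  conv_lhs => rw [p.as_sum]
  rw [map_sum]
  refine (totalDegree_finset_sum _ _).trans (Finset.sup_le fun v hv => ?_)
  rw [pderiv_monomial]
  rcases Nat.eq_zero_or_pos (v i) with h0 | h0
  · simp [h0]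
  · refine (totalDegree_monomial_le _ _).trans ?_
    have hle : Finsupp.single i 1 ≤ v := Finsupp.single_le_iff.mpr h0
    have hv' : v - Finsupp.single i 1 + Finsupp.single i 1 = v := tsub_add_cancel_of_le hle
    have hsum : (v.sum fun _ e => e) = ((v - Finsupp.single i 1).sum fun _ e => e) + 1 := by
      conv_lhs => rw [← hv']
      rw [Finsupp.sum_add_index' (fun _ => rfl) (fun _ _ _ => rfl),
        Finsupp.sum_single_index rfl]
    have hvs : (v.sum fun _ e => e) ≤ c + 1 := le_trans (le_totalDegree hv) h
    have : ((v - Finsupp.single i 1).sum fun _ e => e) ≤ c := by omega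
    exact this

lemma pderiv_eq_zero_of_totalDegree_eq_zero {n : ℕ} (i : Fin n) {p : MvPolynomial (Fin n) ℝ}
    (h : p.totalDegree = 0) : (pderiv i) p = 0 := by
  have hv := (totalDegree_eq_zero_iff _ p).mp h
  have hps : (pderiv i) p = ∑ v ∈ p.support, (pderiv i) (monomial v (coeff v p)) := by
    rw [← map_sum, ← p.as_sum]
  rw [hps]
  refine Finset.sum_eq_zero fun v hv' => ?_
  rw [pderiv_monomial, hv v hv' i, Nat.cast_zero, mul_zero, map_zero]

lemma isHomogeneous_pderiv {n : ℕ} (i : Fin n) {p : MvPolynomial (Fin n) ℝ} {d : ℕ}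
    (h : p.IsHomogeneous (d + 1)) : ((pderiv i) p).IsHomogeneous d := by
  have hps : (pderiv i) p = ∑ v ∈ p.support, (pderiv i) (monomial v (coeff v p)) := by
    rw [← map_sum, ← p.as_sum]
  rw [hps]
  refine IsHomogeneous.sum _ _ _ fun v hv => ?_
  rw [pderiv_monomial]
  rcases Nat.eq_zero_or_pos (v i) with h0 | h0
  · rw [h0, Nat.cast_zero, mul_zero, map_zero]
    exact isHomogeneous_zero _ _ _
  · refine isHomogeneous_monomial _ ?_
    have hdeg : v.degree = d + 1 := by
      have hw := h (MvPolynomial.mem_support_iff.mp hv)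
      rw [Finsupp.degree_eq_weight_one]
      exact hw
    have hle : Finsupp.single i 1 ≤ v := Finsupp.single_le_iff.mpr h0
    have hv' : v - Finsupp.single i 1 + Finsupp.single i 1 = v := tsub_add_cancel_of_le hle
    have hadd : (v - Finsupp.single i 1).degree + (Finsupp.single i 1).degree = v.degree := by
      conv_rhs => rw [← hv']
      simp [Finsupp.degree_eq_weight_one, map_add]
    have hs1 : (Finsupp.single i 1).degree = 1 := by
      exact Finsupp.degree_single i 1
    omega

lemma hasFDerivAt_eval_poly {n : ℕ} (p : MvPolynomial (Fin n) ℝ) (x : Fin n → ℝ) :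
    HasFDerivAt (fun y => eval y p)
      (∑ i : Fin n, eval x ((pderiv i) p) •
        ContinuousLinearMap.proj (R := ℝ) (φ := fun _ : Fin n => ℝ) i) x := by
  induction p using MvPolynomial.induction_on with
  | C a =>
      have h0 : (∑ i : Fin n, eval x ((pderiv i) (MvPolynomial.C a)) •
          ContinuousLinearMap.proj (R := ℝ) (φ := fun _ : Fin n => ℝ) i) = 0 := by
        simp [pderiv_C]
      rw [h0]
      simp only [eval_C]
      exact hasFDerivAt_const a x
  | add p q hp hq =>
      have h1 : (fun y : Fin n → ℝ => eval y (p + q)) = fun y => eval y p + eval y q := by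
        funext y; simp
      have h2 : (∑ i : Fin n, eval x ((pderiv i) (p + q)) •
            ContinuousLinearMap.proj (R := ℝ) (φ := fun _ : Fin n => ℝ) i)
          = (∑ i : Fin n, eval x ((pderiv i) p) • ContinuousLinearMap.proj i)
            + (∑ i : Fin n, eval x ((pderiv i) q) • ContinuousLinearMap.proj i) := by
        rw [← Finset.sum_add_distrib]
        refine Finset.sum_congr rfl fun i _ => ?_
        rw [map_add, map_add, add_smul]
      rw [h1, h2]
      exact hp.add hq
  | mul_X p i hp =>
      have hX : HasFDerivAt (fun y : Fin n → ℝ => y i)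
          (ContinuousLinearMap.proj (R := ℝ) (φ := fun _ : Fin n => ℝ) i) x := by
        exact (ContinuousLinearMap.proj (R := ℝ) (φ := fun _ : Fin n => ℝ) i).hasFDerivAt
      have h1 : (fun y : Fin n → ℝ => eval y (p * X i)) = fun y => eval y p * y i := by
        funext y; simp
      rw [h1]
      have hm := hp.mul hX
      have key : ∀ j : Fin n, eval x ((pderiv j) (p * X i))
          = eval x ((pderiv j) p) * x i + (if j = i then eval x p else 0) := by
        intro j
        rw [pderiv_mul, pderiv_X]
        by_cases hji : j = i <;> simp [hji, Pi.single_apply]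
      have hD : (∑ j : Fin n, eval x ((pderiv j) (p * X i)) •
            ContinuousLinearMap.proj (R := ℝ) (φ := fun _ : Fin n => ℝ) j)
          = (eval x p) • ContinuousLinearMap.proj (R := ℝ) (φ := fun _ : Fin n => ℝ) i
            + x i • ∑ j : Fin n, eval x ((pderiv j) p) •
                ContinuousLinearMap.proj (R := ℝ) (φ := fun _ : Fin n => ℝ) j := by
        ext v
        simp only [ContinuousLinearMap.sum_apply, ContinuousLinearMap.smul_apply,
          ContinuousLinearMap.add_apply, ContinuousLinearMap.proj_apply, smul_eq_mul, key]
        rw [Finset.sum_congr rfl (fun j (_ : j ∈ Finset.univ) =>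
          show (eval x ((pderiv j) p) * x i + if j = i then eval x p else 0) * v j
            = x i * (eval x ((pderiv j) p) * v j) + (if j = i then eval x p * v j else 0) from by
              split <;> ring)]
        rw [Finset.sum_add_distrib, ← Finset.mul_sum,
          Finset.sum_ite_eq' Finset.univ i (fun j => eval x p * v j)]
        simp [add_comm]
      rw [hD]
      exact hm

lemma lieD_eval {n m : ℕ} (F : Fin n → MvPolynomial (Fin n) ℝ)
    (p : Fin m → MvPolynomial (Fin n) ℝ) (x : Fin n → ℝ) (b : Fin m) :
    lieD (fun y i => eval y (F i)) (fun y b => eval y (p b)) x b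
      = eval x (∑ i, F i * (pderiv i) (p b)) := by
  have hφ : HasFDerivAt (fun (y : Fin n → ℝ) (b : Fin m) => eval y (p b))
      (ContinuousLinearMap.pi fun b => ∑ i : Fin n, eval x ((pderiv i) (p b)) •
        ContinuousLinearMap.proj (R := ℝ) (φ := fun _ : Fin n => ℝ) i) x := by
    apply hasFDerivAt_pi''
    intro b
    rw [ContinuousLinearMap.proj_pi]
    exact hasFDerivAt_eval_poly (p b) x
  show (fderiv ℝ (fun (y : Fin n → ℝ) (b : Fin m) => eval y (p b)) x
      (fun i => eval x (F i))) b = _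
  rw [hφ.fderiv]
  rw [map_sum]
  simp only [ContinuousLinearMap.pi_apply, ContinuousLinearMap.sum_apply,
    ContinuousLinearMap.smul_apply, ContinuousLinearMap.proj_apply, smul_eq_mul, eval_mul]
  exact Finset.sum_congr rfl fun i _ => mul_comm _ _

def vp (n : ℕ) : (m : ℕ) → Fin (n ^ m) → MvPolynomial (Fin n) ℝ
  | 0 => fun _ => 1
  | m + 1 => fun i =>
      MvPolynomial.X (finProdFinEquiv.symm (Fin.cast (pow_succ' n m) i)).1 *
        vp n m (finProdFinEquiv.symm (Fin.cast (pow_succ' n m) i)).2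

lemma eval_vp {n : ℕ} (x : Fin n → ℝ) : ∀ (m : ℕ) (i : Fin (n ^ m)),
    eval x (vp n m i) = vpow x m i
  | 0, i => by simp [vp, vpow]
  | m + 1, i => by
      simp [vp, vpow, castV, vkron, eval_vp x m]

lemma isHomogeneous_vp (n : ℕ) : ∀ (m : ℕ) (i : Fin (n ^ m)), (vp n m i).IsHomogeneous m
  | 0, _ => isHomogeneous_one _ _
  | m + 1, i => by
      have h := (isHomogeneous_X ℝ (finProdFinEquiv.symm (Fin.cast (pow_succ' n m) i)).1).mul
        (isHomogeneous_vp n m (finProdFinEquiv.symm (Fin.cast (pow_succ' n m) i)).2)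
      rw [show (1 + m) = m + 1 from Nat.add_comm 1 m] at h
      exact h

lemma key_induction {n m K : ℕ} (hK : 3 ≤ K)
    (F FK Flow : Fin n → MvPolynomial (Fin n) ℝ)
    (hsplit : ∀ i, F i = FK i + Flow i)
    (hFK : ∀ i, (FK i).IsHomogeneous (K - 1))
    (hlow : ∀ i, (Flow i).totalDegree ≤ K - 2)
    (p0 : Fin m → MvPolynomial (Fin n) ℝ) (hp0 : ∀ b, (p0 b).IsHomogeneous 1)
    (j : ℕ) :
    ∃ φ r : Fin m → MvPolynomial (Fin n) ℝ,
      (∀ b, (φ b).IsHomogeneous (j * (K - 2) + 1)) ∧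
      (∀ b, (r b).totalDegree ≤ j * (K - 2)) ∧
      lieIter (fun y i => eval y (F i)) (fun y b => eval y (p0 b)) j
        = (fun x b => eval x (φ b + r b)) ∧
      lieIter (fun y i => eval y (FK i)) (fun y b => eval y (p0 b)) j
        = (fun x b => eval x (φ b)) := by
  have he1 : 1 ≤ K - 2 := by omega
  have heK : K - 1 = (K - 2) + 1 := by omega
  induction j with
  | zero =>
      refine ⟨p0, 0, by simpa using hp0, by simp, ?_, ?_⟩
      · funext x b; simp [lieIter]
      · funext x b; simp [lieIter]
  | succ j ih =>
      obtain ⟨φ, r, hφ, hr, hf, hfK⟩ := ih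
      refine ⟨(fun b => ∑ i, FK i * (pderiv i) (φ b)),
              (fun b => ∑ i, (FK i * (pderiv i) (r b) + Flow i * (pderiv i) (φ b)
                + Flow i * (pderiv i) (r b))), ?_, ?_, ?_, ?_⟩
      · intro b
        refine IsHomogeneous.sum _ _ _ fun i _ => ?_
        have h1 := (hFK i).mul (isHomogeneous_pderiv i (hφ b))
        have harith : (K - 1) + (j * (K - 2)) = (j + 1) * (K - 2) + 1 := by
          rw [heK]; ring
        exact harith ▸ h1
      · intro b
        refine (totalDegree_finset_sum _ _).trans (Finset.sup_le fun i _ => ?_)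
        have hmul : (j + 1) * (K - 2) = j * (K - 2) + (K - 2) := by ring
        have hφd : ((pderiv i) (φ b)).totalDegree ≤ j * (K - 2) :=
          totalDegree_pderiv_le' i (hφ b).totalDegree_le
        have hFKd : (FK i).totalDegree ≤ (K - 2) + 1 := heK ▸ (hFK i).totalDegree_le
        have hlowd := hlow i
        have hterm2 : (Flow i * (pderiv i) (φ b)).totalDegree ≤ (j + 1) * (K - 2) :=
          (totalDegree_mul _ _).trans (by omega)
        have hterm3 : (Flow i * (pderiv i) (r b)).totalDegree ≤ (j + 1) * (K - 2) := by
          have hrd : ((pderiv i) (r b)).totalDegree ≤ j * (K - 2) :=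
            totalDegree_pderiv_le' i ((hr b).trans (Nat.le_succ _))
          exact (totalDegree_mul _ _).trans (by omega)
        have hterm1 : (FK i * (pderiv i) (r b)).totalDegree ≤ (j + 1) * (K - 2) := by
          rcases Nat.eq_zero_or_pos ((r b).totalDegree) with h0 | h0
          · rw [pderiv_eq_zero_of_totalDegree_eq_zero i h0, mul_zero]
            simp
          · have hrd : ((pderiv i) (r b)).totalDegree ≤ (r b).totalDegree - 1 :=
              totalDegree_pderiv_le' i (by omega)
            have hrb := hr b
            exact (totalDegree_mul _ _).trans (by omega)
        exact le_trans (totalDegree_add _ _)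
          (max_le (le_trans (totalDegree_add _ _) (max_le hterm1 hterm2)) hterm3)
      · funext x b
        have hstep : lieIter (fun y i => eval y (F i)) (fun y b => eval y (p0 b)) (j + 1) x b
            = lieD (fun y i => eval y (F i)) (fun y b => eval y (φ b + r b)) x b := by
          simp only [lieIter]; rw [hf]
        rw [hstep, lieD_eval F (fun b => φ b + r b) x b]
        congr 1
        rw [← Finset.sum_add_distrib]
        refine Finset.sum_congr rfl fun i _ => ?_
        rw [hsplit i, map_add]
        ring
      · funext x b
        have hstep : lieIter (fun y i => eval y (FK i)) (fun y b => eval y (p0 b)) (j + 1) x b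
            = lieD (fun y i => eval y (FK i)) (fun y b => eval y (φ b)) x b := by
          simp only [lieIter]; rw [hfK]
        rw [hstep, lieD_eval FK φ x b]

lemma icc_split {α : Type*} [AddCommMonoid α] (K : ℕ) (hK : 3 ≤ K) (f : ℕ → α) :
    ∑ k ∈ Finset.Icc 2 K, f k = f K + ∑ k ∈ Finset.Icc 2 (K - 1), f k := by
  cases K with
  | zero => omega
  | succ K' =>
      rw [show Finset.Icc 2 (K' + 1) = insert (K' + 1) (Finset.Icc 2 K') from
        (Finset.insert_Icc_right_eq_Icc_add_one (by omega)).symm, Finset.sum_insert (by simp)]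
      simp


end Helpers

open MvPolynomial in
/-- For `K ≥ 3`, `f_k(x) = A_k x^{[k-1]}` (`k = 2, …, K`),
`f = Σ_{k=2}^K f_k` and `g(x) = C x`: for every `j ≥ 0`, every component of `L_f^j g` is a
polynomial of total degree at most `j(K-2)+1`, and its homogeneous component of degree
exactly `j(K-2)+1` equals the corresponding component of `L_{f_K}^j g`. -/
theorem top_degree_part_from_max_cardinality (n m K : ℕ) (hK : 3 ≤ K)
    (A : (k : ℕ) → Matrix (Fin n) (Fin (n ^ (k - 1))) ℝ)
    (C : Matrix (Fin m) (Fin n) ℝ) (j : ℕ) (b : Fin m) :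
    ∃ ψ : MvPolynomial (Fin n) ℝ,
      (∀ x : Fin n → ℝ,
        lieIter (fun y => ∑ k ∈ Finset.Icc 2 K, (A k).mulVec (vpow y (k - 1)))
            (fun y => C.mulVec y) j x b = MvPolynomial.eval x ψ) ∧
      ψ.totalDegree ≤ j * (K - 2) + 1 ∧
      (∀ x : Fin n → ℝ,
        MvPolynomial.eval x (MvPolynomial.homogeneousComponent (j * (K - 2) + 1) ψ) =
          lieIter (fun y => (A K).mulVec (vpow y (K - 1))) (fun y => C.mulVec y) j x b) := by
  classical
  have hg : (fun y => C.mulVec y)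
      = fun y (b : Fin m) => eval y (∑ i, MvPolynomial.C (C b i) * MvPolynomial.X i) := by
    funext y b; simp [Matrix.mulVec, dotProduct]
  have hf : (fun y => ∑ k ∈ Finset.Icc 2 K, (A k).mulVec (vpow y (k - 1)))
      = fun y (i : Fin n) => eval y (∑ k ∈ Finset.Icc 2 K,
          ∑ l, MvPolynomial.C (A k i l) * vp n (k - 1) l) := by
    funext y i
    simp [Matrix.mulVec, dotProduct, eval_vp, Finset.sum_apply]
  have hfK : (fun y => (A K).mulVec (vpow y (K - 1)))
      = fun y (i : Fin n) => eval y (∑ l, MvPolynomial.C (A K i l) * vp n (K - 1) l) := by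
    funext y i
    simp [Matrix.mulVec, dotProduct, eval_vp]
  have hsplit : ∀ i : Fin n,
      (∑ k ∈ Finset.Icc 2 K, ∑ l, MvPolynomial.C (A k i l) * vp n (k - 1) l)
        = (∑ l, MvPolynomial.C (A K i l) * vp n (K - 1) l)
          + ∑ k ∈ Finset.Icc 2 (K - 1), ∑ l, MvPolynomial.C (A k i l) * vp n (k - 1) l :=
    fun i => icc_split K hK _
  have hFKh : ∀ i : Fin n,
      (∑ l, MvPolynomial.C (A K i l) * vp n (K - 1) l).IsHomogeneous (K - 1) := by
    intro i
    exact IsHomogeneous.sum _ _ _ fun l _ => (isHomogeneous_vp n (K - 1) l).C_mul _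
  have hlow : ∀ i : Fin n,
      (∑ k ∈ Finset.Icc 2 (K - 1), ∑ l,
        MvPolynomial.C (A k i l) * vp n (k - 1) l).totalDegree ≤ K - 2 := by
    intro i
    refine (totalDegree_finset_sum _ _).trans (Finset.sup_le fun k hk => ?_)
    refine (totalDegree_finset_sum _ _).trans (Finset.sup_le fun l _ => ?_)
    refine (totalDegree_mul _ _).trans ?_
    have h1 : (MvPolynomial.C (R := ℝ) (σ := Fin n) (A k i l)).totalDegree = 0 :=
      totalDegree_C _
    have h2 : (vp n (k - 1) l).totalDegree ≤ k - 1 := (isHomogeneous_vp n (k - 1) l).totalDegree_le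
    have hk' := Finset.mem_Icc.mp hk
    omega
  have hp0 : ∀ b : Fin m, (∑ i, MvPolynomial.C (C b i) * MvPolynomial.X i).IsHomogeneous 1 :=
    fun b => IsHomogeneous.sum _ _ _ fun i _ => isHomogeneous_C_mul_X _ _
  obtain ⟨φ, r, hφ, hr, hEq, hEqK⟩ := key_induction hK _ _ _ hsplit hFKh hlow _ hp0 j
  refine ⟨φ b + r b, ?_, ?_, ?_⟩
  · intro x
    rw [hf, hg, hEq]
  · exact (totalDegree_add _ _).trans
      (max_le (hφ b).totalDegree_le ((hr b).trans (Nat.le_succ _)))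
  · intro x
    rw [hfK, hg, hEqK]
    rw [map_add, homogeneousComponent_of_mem (hφ b),
      homogeneousComponent_eq_zero _ _ (lt_of_le_of_lt (hr b) (Nat.lt_succ_self _))]
    simp


end
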